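/- arXiv:0906.1861 — 2 statements merged into one kernel-verified Lean document; each statement's English description precedes it below -/
import Mathlib

section
/- For every complex number a with a ∉ {1, 2} and all complex x, y with x ≠ 0, y ≠ 0 and |x| + |y| < 1, Appell's second hypergeometric function satisfies F₂(a; 1, 1; 2, 2; x, y) = (1 − (1−x)^{2−a} − (1−y)^{2−a} + (1−x−y)^{2−a}) / ((1−a)(2−a) x y), where all powers are principal branches. -/
open Filter Set Finset

/-- Pochhammer symbol `(z)_k = ∏_{i=0}^{k-1} (z + i)` for a complex number `z`. -/
noncomputable def poch (z : ℂ) (k : ℕ) : ℂ := ∏ i ∈ Finset.range k, (z + i)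

lemma poch_zero (z : ℂ) : poch z 0 = 1 := by simp [poch]

lemma poch_succ (z : ℂ) (k : ℕ) : poch z (k + 1) = poch z k * (z + k) := by
  simp [poch, Finset.prod_range_succ]

lemma poch_one_eq (k : ℕ) : poch 1 k = (Nat.factorial k : ℂ) := by
  induction k with
  | zero => simp [poch]
  | succ n ih => rw [poch_succ, ih]; push_cast [Nat.factorial_succ]; ring

lemma poch_two_eq (k : ℕ) : poch 2 k = (Nat.factorial (k+1) : ℂ) := by
  induction k with
  | zero => simp [poch]
  | succ n ih => rw [poch_succ, ih]; push_cast [Nat.factorial_succ]; ring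

lemma poch_add_two (w : ℂ) (k : ℕ) : poch w (k + 2) = w * (w + 1) * poch (w + 2) k := by
  induction k with
  | zero => simp [poch, Finset.prod_range_succ]
  | succ n ih =>
      have : n + 1 + 2 = (n + 2) + 1 := by ring
      rw [this, poch_succ, ih, poch_succ]
      push_cast
      ring

/-- coefficient of the binomial series -/
noncomputable def bc (w : ℂ) (k : ℕ) : ℂ := poch w k / (Nat.factorial k : ℂ)

lemma bc_zero (w : ℂ) : bc w 0 = 1 := by simp [bc, poch_zero]

lemma bc_succ (w : ℂ) (k : ℕ) : ((k : ℂ) + 1) * bc w (k + 1) = (w + k) * bc w k := by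
  have hk : ((Nat.factorial k : ℂ)) ≠ 0 := Nat.cast_ne_zero.2 (Nat.factorial_ne_zero k)
  have hk1 : (Nat.factorial (k+1) : ℂ) ≠ 0 := Nat.cast_ne_zero.2 (Nat.factorial_ne_zero _)
  have hk1' : ((k:ℂ) + 1) ≠ 0 := by
    have := Nat.cast_ne_zero (R := ℂ).2 (Nat.succ_ne_zero k)
    push_cast at this; exact this
  rw [bc, bc, poch_succ, Nat.factorial_succ]
  push_cast
  field_simp

lemma norm_bc_succ (w : ℂ) (k : ℕ) : ((k : ℝ) + 1) * ‖bc w (k + 1)‖ = ‖w + k‖ * ‖bc w k‖ := by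
  have h := congrArg norm (bc_succ w k)
  rw [norm_mul, norm_mul] at h
  have hn : ‖((k:ℂ) + 1)‖ = (k:ℝ) + 1 := by
    have : ((k:ℂ) + 1) = ((k+1 : ℕ) : ℂ) := by push_cast; ring
    rw [this, Complex.norm_natCast]; push_cast; ring
  rwa [hn] at h

lemma ev_ratio (w : ℂ) {r : ℝ} (hr0 : 0 ≤ r) (hr1 : r < 1) :
    ∀ᶠ k : ℕ in atTop, ‖w + (k : ℂ)‖ * r ≤ (1 + r) / 2 * k := by
  set r' : ℝ := (1 + r) / 2 with hr'
  have hgap : 0 < r' - r := by rw [hr']; linarith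
  filter_upwards [eventually_ge_atTop ⌈(‖w‖ * r) / (r' - r)⌉₊] with k hk
  have hk' : (‖w‖ * r) / (r' - r) ≤ (k : ℝ) := by
    exact_mod_cast (Nat.ceil_le.1 hk)
  have h1 : ‖w‖ * r ≤ (r' - r) * k := by
    rw [div_le_iff₀ hgap] at hk'
    linarith
  have h2 : ‖w + (k : ℂ)‖ ≤ ‖w‖ + k := by
    simpa using norm_add_le w (k : ℂ)
  calc ‖w + (k : ℂ)‖ * r ≤ (‖w‖ + k) * r := by
        apply mul_le_mul_of_nonneg_right h2 hr0
    _ ≤ r' * k := by nlinarith [Nat.cast_nonneg (α := ℝ) k]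

lemma summable_bc (w : ℂ) {r : ℝ} (hr0 : 0 ≤ r) (hr1 : r < 1) :
    Summable (fun k : ℕ => ‖bc w k‖ * r ^ k) := by
  have hr'1 : (1 + r) / 2 < 1 := by linarith
  apply summable_of_ratio_norm_eventually_le hr'1
  filter_upwards [ev_ratio w hr0 hr1] with k hk
  have hkpos : (0:ℝ) < (k : ℝ) + 1 := by positivity
  have h1 : ‖bc w (k+1)‖ = ‖w + k‖ * ‖bc w k‖ / ((k:ℝ) + 1) := by
    rw [← norm_bc_succ]; field_simp
  have hb : (0:ℝ) ≤ ‖bc w k‖ * r ^ k := by positivity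
  have hkk : ‖w + (k:ℂ)‖ * r ≤ (1 + r) / 2 * ((k:ℝ)+1) := by
    refine hk.trans ?_
    have : (0:ℝ) ≤ (1+r)/2 := by linarith
    nlinarith
  rw [Real.norm_eq_abs, Real.norm_eq_abs, abs_of_nonneg (by positivity), abs_of_nonneg hb]
  rw [h1, pow_succ]
  rw [div_mul_eq_mul_div, div_le_iff₀ hkpos]
  calc ‖w + (k:ℂ)‖ * ‖bc w k‖ * (r ^ k * r) = (‖w + (k:ℂ)‖ * r) * (‖bc w k‖ * r ^ k) := by ring
    _ ≤ ((1 + r) / 2 * ((k:ℝ)+1)) * (‖bc w k‖ * r ^ k) := mul_le_mul_of_nonneg_right hkk hb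
    _ = (1 + r) / 2 * (‖bc w k‖ * r ^ k) * ((k:ℝ)+1) := by ring

lemma summable_bc_deriv (w : ℂ) {r : ℝ} (hr0 : 0 ≤ r) (hr1 : r < 1) :
    Summable (fun k : ℕ => ((k:ℝ) + 1) * ‖bc w (k+1)‖ * r ^ k) := by
  have hr'1 : (1 + r) / 2 < 1 := by linarith
  apply summable_of_ratio_norm_eventually_le hr'1
  have hev : ∀ᶠ k : ℕ in atTop, ‖w + ((k:ℂ) + 1)‖ * r ≤ (1 + r) / 2 * ((k:ℝ) + 1) := by
    have := ev_ratio w hr0 hr1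
    rw [eventually_atTop] at this ⊢
    obtain ⟨N, hN⟩ := this
    refine ⟨N, fun k hk => ?_⟩
    have := hN (k+1) (le_trans hk (Nat.le_succ k))
    push_cast at this ⊢
    convert this using 3 <;> push_cast <;> ring
  filter_upwards [hev] with k hk
  have hb : (0:ℝ) ≤ ((k:ℝ)+1) * ‖bc w (k+1)‖ * r ^ k := by positivity
  rw [Real.norm_eq_abs, Real.norm_eq_abs, abs_of_nonneg (by positivity), abs_of_nonneg hb]
  have h1 : ((k:ℝ) + 1 + 1) * ‖bc w (k+1+1)‖ = ‖w + ((k:ℂ)+1)‖ * ‖bc w (k+1)‖ := by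
    have := norm_bc_succ w (k+1)
    push_cast at this ⊢
    convert this using 3 <;> push_cast <;> ring
  push_cast
  rw [pow_succ]
  calc ((k:ℝ) + 1 + 1) * ‖bc w (k+1+1)‖ * (r ^ k * r)
      = (‖w + ((k:ℂ)+1)‖ * r) * (‖bc w (k+1)‖ * r ^ k) := by rw [h1]; ring
    _ ≤ ((1 + r) / 2 * ((k:ℝ)+1)) * (‖bc w (k+1)‖ * r ^ k) := by
        apply mul_le_mul_of_nonneg_right hk (by positivity)
    _ = (1 + r) / 2 * (((k:ℝ)+1) * ‖bc w (k+1)‖ * r ^ k) := by ring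

lemma one_sub_ne_zero {y : ℂ} (hy : ‖y‖ < 1) : (1 : ℂ) - y ≠ 0 := by
  intro h
  have : y = 1 := by linear_combination -h
  rw [this] at hy; simp at hy

lemma one_sub_mem_slitPlane {y : ℂ} (hy : ‖y‖ < 1) : (1 - y) ∈ Complex.slitPlane := by
  rw [Complex.mem_slitPlane_iff]
  left
  have h1 : |y.re| ≤ ‖y‖ := Complex.abs_re_le_norm y
  have : y.re < 1 := lt_of_le_of_lt (le_trans (le_abs_self _) h1) hy
  simp [Complex.sub_re]
  linarith

lemma hasSum_binomial (w : ℂ) {z : ℂ} (hz : ‖z‖ < 1) :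
    HasSum (fun k : ℕ => bc w k * z ^ k) ((1 - z) ^ (-w)) := by
  classical
  set r : ℝ := (‖z‖ + 1) / 2 with hrdef
  have hr0 : 0 ≤ r := by positivity
  have hzr : ‖z‖ < r := by rw [hrdef]; linarith
  have hr1 : r < 1 := by rw [hrdef]; linarith
  set t : Set ℂ := Metric.ball (0 : ℂ) r with htdef
  have hmem : ∀ u ∈ t, ‖u‖ < r := fun u hu => by
    simpa [htdef, Metric.mem_ball, dist_zero_right] using hu
  have hzt : z ∈ t := by
    simp only [htdef, Metric.mem_ball, dist_zero_right]; exact hzr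
  have h0t : (0:ℂ) ∈ t := by
    simp only [htdef, Metric.mem_ball, dist_zero_right, norm_zero]; positivity
  set g : ℕ → ℂ → ℂ := fun k u => bc w k * u ^ k with hgdef
  set g' : ℕ → ℂ → ℂ := fun k u => bc w k * ((k:ℂ) * u ^ (k-1)) with hg'def
  set U : ℕ → ℝ := fun k => ‖bc w k‖ * ((k:ℝ) * r ^ (k-1)) with hUdef
  have hU : Summable U := by
    rw [← summable_nat_add_iff 1]
    have : (fun n : ℕ => U (n + 1)) = fun n : ℕ => ((n:ℝ) + 1) * ‖bc w (n+1)‖ * r ^ n := by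
      funext n
      simp only [hUdef, Nat.add_sub_cancel]
      push_cast
      ring
    rw [this]
    exact summable_bc_deriv w hr0 hr1
  have hderiv : ∀ k : ℕ, ∀ u ∈ t, HasDerivAt (g k) (g' k u) u := fun k u _ =>
    (hasDerivAt_pow k u).const_mul (bc w k)
  have hbound : ∀ k : ℕ, ∀ u ∈ t, ‖g' k u‖ ≤ U k := by
    intro k u hu
    simp only [hg'def, hUdef, norm_mul, Complex.norm_natCast, norm_pow]
    apply mul_le_mul_of_nonneg_left _ (norm_nonneg _)
    apply mul_le_mul_of_nonneg_left _ (Nat.cast_nonneg k)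
    exact pow_le_pow_left₀ (norm_nonneg u) (le_of_lt (hmem u hu)) _
  have hsum0 : Summable (fun k => g k 0) := by
    apply summable_of_ne_finset_zero (s := {0})
    intro k hk
    have : k ≠ 0 := by simpa using hk
    simp [hgdef, zero_pow this]
  have hD : ∀ y ∈ t, HasDerivAt (fun u => ∑' k, g k u) (∑' k, g' k y) y := fun y hy =>
    hasDerivAt_tsum_of_isPreconnected hU Metric.isOpen_ball
      ((convex_ball (0:ℂ) r).isPreconnected) hderiv hbound h0t hsum0 hy
  set f : ℂ → ℂ := fun u => ∑' k, g k u with hfdef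
  set D : ℂ → ℂ := fun u => ∑' k, g' k u with hDdef
  have hfsum : ∀ y ∈ t, HasSum (fun k => g k y) (f y) := by
    intro y hy
    apply Summable.hasSum
    apply Summable.of_norm
    apply Summable.of_nonneg_of_le (fun k => norm_nonneg _) _ (summable_bc w hr0 hr1)
    intro k
    simp only [hgdef, norm_mul, norm_pow]
    apply mul_le_mul_of_nonneg_left _ (norm_nonneg _)
    exact pow_le_pow_left₀ (norm_nonneg y) (le_of_lt (hmem y hy)) _
  have hDsum : ∀ y ∈ t, HasSum (fun k => g' k y) (D y) := by
    intro y hy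
    apply Summable.hasSum
    apply Summable.of_norm
    apply Summable.of_nonneg_of_le (fun k => norm_nonneg _) _ hU
    intro k
    exact hbound k y hy
  have hODE : ∀ y ∈ t, (1 - y) * D y - w * f y = 0 := by
    intro y hy
    have hoff : ∀ x : ℕ, x ∉ Set.range Nat.succ → g' x y = 0 := by
      intro x hx
      have hx0 : x = 0 := by
        by_contra h
        exact hx ⟨x - 1, Nat.succ_pred_eq_of_pos (Nat.pos_of_ne_zero h)⟩
      simp [hg'def, hx0]
    have h1 : HasSum (fun k : ℕ => g' (k+1) y) (D y) := by
      have := (Function.Injective.hasSum_iff Nat.succ_injective hoff).mpr (hDsum y hy)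
      exact this
    have h1' : HasSum (fun k : ℕ => bc w (k+1) * (((k:ℂ)+1) * y ^ k)) (D y) := by
      refine h1.congr_fun fun k => ?_
      simp only [hg'def, Nat.add_sub_cancel]
      push_cast
      ring
    have h2 : HasSum (fun k : ℕ => g' k y * y) (D y * y) := (hDsum y hy).mul_right y
    have h2' : HasSum (fun k : ℕ => (k:ℂ) * bc w k * y ^ k) (D y * y) := by
      refine h2.congr_fun fun k => ?_
      cases k with
      | zero => simp [hg'def]
      | succ n =>
        simp only [hg'def, Nat.add_sub_cancel]
        push_cast
        rw [pow_succ]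
        ring
    have h3 : HasSum (fun k : ℕ => w * (bc w k * y ^ k)) (w * f y) := (hfsum y hy).mul_left w
    have hcomb := (h1'.sub h2').sub h3
    have hterm : (fun k : ℕ => bc w (k+1) * (((k:ℂ)+1) * y ^ k) - (k:ℂ) * bc w k * y ^ k
        - w * (bc w k * y ^ k)) = fun _ => (0:ℂ) := by
      funext k
      have hb := bc_succ w k
      linear_combination y ^ k * hb
    rw [hterm] at hcomb
    have := hasSum_zero.unique hcomb
    linear_combination -this
  set G : ℂ → ℂ := fun u => f u * (1 - u) ^ w with hGdef
  have hGd : ∀ y ∈ t, HasDerivAt G 0 y := by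
    intro y hy
    have hy1 : ‖y‖ < 1 := lt_trans (hmem y hy) hr1
    have hne : (1:ℂ) - y ≠ 0 := one_sub_ne_zero hy1
    have hcp : HasDerivAt (fun u : ℂ => (1 - u) ^ w) (w * (1-y) ^ (w-1) * (-1)) y :=
      HasDerivAt.cpow_const ((hasDerivAt_id y).const_sub 1) (one_sub_mem_slitPlane hy1)
    have hmul := (hD y hy).mul hcp
    have hsplit : (1-y) ^ w = (1-y) ^ (w-1) * (1-y) := by
      have h := Complex.cpow_add (w-1) 1 hne
      rw [Complex.cpow_one, sub_add_cancel] at h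
      exact h
    have : D y * (1-y) ^ w + f y * (w * (1-y) ^ (w-1) * (-1))
        = (1-y) ^ (w-1) * ((1 - y) * D y - w * f y) := by
      rw [hsplit]; ring
    rw [hODE y hy, mul_zero] at this
    rw [hGdef]
    have h0 : HasDerivAt (fun u => f u * (1 - u) ^ w)
        (D y * (1-y) ^ w + f y * (w * (1-y) ^ (w-1) * (-1))) y := hmul
    rwa [this] at h0
  have hconst : G z = G 0 := by
    apply (convex_ball (0:ℂ) r).is_const_of_fderivWithin_eq_zero
      (fun u hu => (hGd u hu).differentiableAt.differentiableWithinAt)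
      (fun u hu => ?_) hzt h0t
    rw [fderivWithin_of_isOpen Metric.isOpen_ball hu, (hGd u hu).hasFDerivAt.fderiv]
    ext v
    simp
  have hf0 : f 0 = 1 := by
    have h : f 0 = ∑' k, g k 0 := rfl
    rw [h, tsum_eq_single 0 (fun k hk => by simp [hgdef, zero_pow hk])]
    simp [hgdef, bc_zero]
  have hG0 : G 0 = 1 := by
    simp only [hGdef, sub_zero, Complex.one_cpow, mul_one, hf0]
  have key : f z * (1 - z) ^ w = 1 := hconst.trans hG0
  have hfz : f z = ((1 - z) ^ w)⁻¹ := eq_inv_of_mul_eq_one_right (by rw [mul_comm]; exact key)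
  have := hfsum z hzt
  rw [hfz, ← Complex.cpow_neg] at this
  exact this

lemma fiber_sum (w x y : ℂ) (n : ℕ) :
    ∑ p ∈ Finset.HasAntidiagonal.antidiagonal n,
      poch w (p.1 + p.2) * x ^ p.1 * y ^ p.2 /
        ((Nat.factorial p.1 : ℂ) * (Nat.factorial p.2 : ℂ))
      = bc w n * (x + y) ^ n := by
  rw [Finset.Nat.sum_antidiagonal_eq_sum_range_succ_mk, add_pow, Finset.mul_sum]
  apply Finset.sum_congr rfl
  intro m hm
  have hmn : m ≤ n := Nat.lt_succ_iff.mp (Finset.mem_range.mp hm)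
  have hadd : m + (n - m) = n := Nat.add_sub_cancel' hmn
  have hfac : (Nat.factorial n : ℂ)
      = (n.choose m : ℂ) * (Nat.factorial m : ℂ) * (Nat.factorial (n - m) : ℂ) := by
    exact_mod_cast congrArg (Nat.cast (R := ℂ))
      (Nat.choose_mul_factorial_mul_factorial hmn).symm
  have h1 : (Nat.factorial m : ℂ) ≠ 0 := Nat.cast_ne_zero.2 (Nat.factorial_ne_zero m)
  have h2 : (Nat.factorial (n - m) : ℂ) ≠ 0 := Nat.cast_ne_zero.2 (Nat.factorial_ne_zero _)
  have h3 : (Nat.factorial n : ℂ) ≠ 0 := Nat.cast_ne_zero.2 (Nat.factorial_ne_zero n)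
  simp only [hadd, bc]
  field_simp
  rw [hfac]
  ring

lemma fiber_sum_norm (w x y : ℂ) (n : ℕ) :
    ∑ p ∈ Finset.HasAntidiagonal.antidiagonal n,
      ‖poch w (p.1 + p.2) * x ^ p.1 * y ^ p.2 /
        ((Nat.factorial p.1 : ℂ) * (Nat.factorial p.2 : ℂ))‖
      = ‖bc w n‖ * (‖x‖ + ‖y‖) ^ n := by
  rw [Finset.Nat.sum_antidiagonal_eq_sum_range_succ_mk, add_pow, Finset.mul_sum]
  apply Finset.sum_congr rfl
  intro m hm
  have hmn : m ≤ n := Nat.lt_succ_iff.mp (Finset.mem_range.mp hm)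
  have hadd : m + (n - m) = n := Nat.add_sub_cancel' hmn
  have hfac : (Nat.factorial n : ℝ)
      = (n.choose m : ℝ) * (Nat.factorial m : ℝ) * (Nat.factorial (n - m) : ℝ) := by
    exact_mod_cast congrArg (Nat.cast (R := ℝ))
      (Nat.choose_mul_factorial_mul_factorial hmn).symm
  have h1 : (Nat.factorial m : ℝ) ≠ 0 := Nat.cast_ne_zero.2 (Nat.factorial_ne_zero m)
  have h2 : (Nat.factorial (n - m) : ℝ) ≠ 0 := Nat.cast_ne_zero.2 (Nat.factorial_ne_zero _)
  have h3 : (Nat.factorial n : ℝ) ≠ 0 := Nat.cast_ne_zero.2 (Nat.factorial_ne_zero n)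
  simp only [hadd, norm_div, norm_mul, norm_pow, Complex.norm_natCast, bc]
  field_simp
  rw [hfac]
  ring


lemma hasSum_double (w : ℂ) {x y : ℂ} (hxy : ‖x‖ + ‖y‖ < 1) :
    HasSum (fun p : ℕ × ℕ => poch w (p.1 + p.2) * x ^ p.1 * y ^ p.2 /
        ((Nat.factorial p.1 : ℂ) * (Nat.factorial p.2 : ℂ)))
      ((1 - x - y) ^ (-w)) := by
  set d : ℕ × ℕ → ℂ := fun p => poch w (p.1 + p.2) * x ^ p.1 * y ^ p.2 /
        ((Nat.factorial p.1 : ℂ) * (Nat.factorial p.2 : ℂ)) with hd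
  have hr0 : (0:ℝ) ≤ ‖x‖ + ‖y‖ := by positivity
  have hxy1 : ‖x + y‖ < 1 := lt_of_le_of_lt (norm_add_le x y) hxy
  set e := Finset.HasAntidiagonal.sigmaAntidiagonalEquivProd (A := ℕ) with he
  have hnorm : Summable (fun p : ℕ × ℕ => ‖d p‖) := by
    refine e.summable_iff.mp ((summable_sigma_of_nonneg (fun q => norm_nonneg _)).2
      ⟨fun n => Summable.of_finite, ?_⟩)
    · have hts : ∀ n : ℕ, ∑' c : (Finset.HasAntidiagonal.antidiagonal n : Finset (ℕ × ℕ)),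
          ((fun p => ‖d p‖) ∘ e) ⟨n, c⟩ = ‖bc w n‖ * (‖x‖ + ‖y‖) ^ n := by
        intro n
        have : ∀ c : (Finset.HasAntidiagonal.antidiagonal n : Finset (ℕ × ℕ)),
            ((fun p => ‖d p‖) ∘ e) ⟨n, c⟩ = ‖d c‖ := fun c => rfl
        rw [tsum_congr this]
        exact (Finset.tsum_subtype (Finset.HasAntidiagonal.antidiagonal n) (fun p => ‖d p‖)).trans
          (fiber_sum_norm w x y n)
      exact (summable_bc w hr0 hxy).congr fun n => (hts n).symm
  have hsummd : Summable d := hnorm.of_norm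
  have hs : HasSum d (∑' p, d p) := hsummd.hasSum
  have hsig : HasSum (d ∘ e) (∑' p, d p) := e.hasSum_iff.2 hs
  have hfib : ∀ n : ℕ, HasSum (fun c : (Finset.HasAntidiagonal.antidiagonal n : Finset (ℕ × ℕ)) => d c)
      (bc w n * (x + y) ^ n) := by
    intro n
    have h := (Finset.HasAntidiagonal.antidiagonal n).hasSum d
    rwa [fiber_sum w x y n] at h
  have houter : HasSum (fun n => bc w n * (x + y) ^ n) (∑' p, d p) := hsig.sigma hfib
  have hbin : HasSum (fun n => bc w n * (x + y) ^ n) ((1 - (x + y)) ^ (-w)) :=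
    hasSum_binomial w hxy1
  have : ∑' p, d p = (1 - (x + y)) ^ (-w) := houter.unique hbin
  rw [this, sub_add_eq_sub_sub] at hs
  exact hs

lemma hasSum_shifted (w : ℂ) {x y : ℂ} (hx1 : ‖x‖ < 1) (hy1 : ‖y‖ < 1)
    (hxy : ‖x‖ + ‖y‖ < 1) :
    HasSum (fun q : ℕ × ℕ => poch w ((q.1 + 1) + (q.2 + 1)) * x ^ (q.1 + 1) * y ^ (q.2 + 1) /
        ((Nat.factorial (q.1 + 1) : ℂ) * (Nat.factorial (q.2 + 1) : ℂ)))
      ((1 - x - y) ^ (-w) - (1 - y) ^ (-w) - ((1 - x) ^ (-w) - 1)) := by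
  classical
  set d : ℕ × ℕ → ℂ := fun p => poch w (p.1 + p.2) * x ^ p.1 * y ^ p.2 /
        ((Nat.factorial p.1 : ℂ) * (Nat.factorial p.2 : ℂ)) with hd
  have hd2 : HasSum d ((1 - x - y) ^ (-w)) := hasSum_double w hxy
  -- first axis
  set i1 : ℕ → ℕ × ℕ := fun n => (0, n) with hi1def
  have hi1 : Function.Injective i1 := fun a b h => by simpa [hi1def] using congrArg Prod.snd h
  have hB1 : HasSum (fun n => d (0, n)) ((1 - y) ^ (-w)) := by
    have h := hasSum_binomial w hy1
    refine HasSum.congr_fun h (fun n => ?_)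
    simp only [hd, hi1def, bc, Nat.factorial_zero]
    push_cast
    ring
  have hI1 : HasSum ((Set.range i1).indicator d) ((1 - y) ^ (-w)) := by
    refine (Function.Injective.hasSum_iff hi1
      (fun p hp => Set.indicator_of_notMem hp d)).1 ?_
    have heq : ((Set.range i1).indicator d ∘ i1) = fun n => d (0, n) :=
      funext fun n => by
        rw [Function.comp_apply, Set.indicator_of_mem (Set.mem_range_self n) d]
    rw [heq]
    exact hB1
  have hcompl : HasSum ((Set.range i1)ᶜ.indicator d)
      ((1 - x - y) ^ (-w) - (1 - y) ^ (-w)) := by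
    have h := hd2.sub hI1
    have heq : ((Set.range i1)ᶜ.indicator d) = fun p => d p - (Set.range i1).indicator d p := by
      rw [Set.indicator_compl]; rfl
    rw [heq]
    exact h
  -- second axis
  set i2 : ℕ → ℕ × ℕ := fun m => (m + 1, 0) with hi2def
  have hi2 : Function.Injective i2 := fun a b h => by
    have := congrArg Prod.fst h
    simpa [hi2def] using this
  have hB2 : HasSum (fun m => d (m + 1, 0)) ((1 - x) ^ (-w) - 1) := by
    have hx2 : HasSum (fun k => bc w k * x ^ k) ((1 - x) ^ (-w)) := hasSum_binomial w hx1
    have h := (hasSum_nat_add_iff (f := fun k => bc w k * x ^ k) 1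
      (g := (1 - x) ^ (-w) - 1)).2 ?_
    · refine HasSum.congr_fun h (fun m => ?_)
      simp only [hd, hi2def, bc, Nat.factorial_zero]
      push_cast
      ring
    · have : (1 - x) ^ (-w) - 1 + ∑ i ∈ Finset.range 1, bc w i * x ^ i = (1 - x) ^ (-w) := by
        simp [bc_zero]
      rw [this]
      exact hx2
  have hI2 : HasSum ((Set.range i2).indicator d) ((1 - x) ^ (-w) - 1) := by
    refine (Function.Injective.hasSum_iff hi2
      (fun p hp => Set.indicator_of_notMem hp d)).1 ?_
    have heq : ((Set.range i2).indicator d ∘ i2) = fun m => d (m + 1, 0) :=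
      funext fun m => by
        rw [Function.comp_apply, Set.indicator_of_mem (Set.mem_range_self m) d]
    rw [heq]
    exact hB2
  -- interior
  set i3 : ℕ × ℕ → ℕ × ℕ := fun q => (q.1 + 1, q.2 + 1) with hi3def
  have hi3 : Function.Injective i3 := by
    intro p q h
    have h1 := congrArg Prod.fst h
    have h2 := congrArg Prod.snd h
    simp only [hi3def] at h1 h2
    exact Prod.ext (by omega) (by omega)
  have hrest2 : HasSum (fun p => (Set.range i1)ᶜ.indicator d p - (Set.range i2).indicator d p)
      ((1 - x - y) ^ (-w) - (1 - y) ^ (-w) - ((1 - x) ^ (-w) - 1)) := hcompl.sub hI2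
  have heq3 : (fun p => (Set.range i1)ᶜ.indicator d p - (Set.range i2).indicator d p)
      = (Set.range i3).indicator d := by
    funext p
    obtain ⟨i, j⟩ := p
    rcases i with _ | i
    · rcases j with _ | j <;>
        simp [Set.indicator_apply, hi1def, hi2def, hi3def, Set.mem_range, Prod.ext_iff]
    · rcases j with _ | j <;>
        simp [Set.indicator_apply, hi1def, hi2def, hi3def, Set.mem_range, Prod.ext_iff]
  rw [heq3] at hrest2
  have hfin := (Function.Injective.hasSum_iff hi3
      (fun p hp => Set.indicator_of_notMem hp d)).2 hrest2
  refine HasSum.congr_fun hfin (fun q => ?_)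
  rw [Function.comp_apply, Set.indicator_of_mem (Set.mem_range_self q) d]



/-- Appell's `F₂` double series. -/
noncomputable def appellF2 (a b₁ b₂ c₁ c₂ x y : ℂ) : ℂ :=
  ∑' p : ℕ × ℕ, poch a (p.1 + p.2) * poch b₁ p.1 * poch b₂ p.2 /
    (poch c₁ p.1 * poch c₂ p.2 * (Nat.factorial p.1 : ℂ) * (Nat.factorial p.2 : ℂ)) *
    x ^ p.1 * y ^ p.2

theorem stmt_1 (a x y : ℂ) (ha1 : a ≠ 1) (ha2 : a ≠ 2) (hx : x ≠ 0) (hy : y ≠ 0)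
    (hxy : ‖x‖ + ‖y‖ < 1) :
    appellF2 a 1 1 2 2 x y =
      (1 - (1 - x) ^ (2 - a) - (1 - y) ^ (2 - a) + (1 - x - y) ^ (2 - a)) /
        ((1 - a) * (2 - a) * x * y) := by
  have hxy' : ‖x‖ + ‖y‖ < 1 := hxy
  have hx1 : ‖x‖ < 1 := by
    have : (0:ℝ) ≤ ‖y‖ := norm_nonneg y
    linarith
  have hy1 : ‖y‖ < 1 := by
    have : (0:ℝ) ≤ ‖x‖ := norm_nonneg x
    linarith
  set w : ℂ := a - 2 with hw
  have hnw : -w = 2 - a := by rw [hw]; ring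
  have hshift := hasSum_shifted w hx1 hy1 hxy'
  rw [hnw] at hshift
  set T : ℕ × ℕ → ℂ := fun p => poch a (p.1 + p.2) * poch 1 p.1 * poch 1 p.2 /
    (poch 2 p.1 * poch 2 p.2 * (Nat.factorial p.1 : ℂ) * (Nat.factorial p.2 : ℂ)) *
    x ^ p.1 * y ^ p.2 with hT
  set c : ℂ := (a - 2) * (a - 1) * x * y with hc
  have hcne : c ≠ 0 := by
    apply mul_ne_zero (mul_ne_zero (mul_ne_zero ?_ ?_) hx) hy
    · exact sub_ne_zero.mpr ha2
    · exact sub_ne_zero.mpr ha1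
  have hterm : ∀ q : ℕ × ℕ, poch w ((q.1 + 1) + (q.2 + 1)) * x ^ (q.1 + 1) * y ^ (q.2 + 1) /
      ((Nat.factorial (q.1 + 1) : ℂ) * (Nat.factorial (q.2 + 1) : ℂ)) = c * T q := by
    intro q
    obtain ⟨i, j⟩ := q
    have hp : poch w ((i + 1) + (j + 1)) = (a - 2) * (a - 1) * poch a (i + j) := by
      have h : (i + 1) + (j + 1) = (i + j) + 2 := by omega
      rw [h, poch_add_two, hw]
      rw [show a - 2 + 1 = a - 1 from by ring, show a - 2 + 2 = a from by ring]
    simp only [hT, hc, hp, poch_one_eq, poch_two_eq]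
    have h1 : (Nat.factorial i : ℂ) ≠ 0 := Nat.cast_ne_zero.2 (Nat.factorial_ne_zero i)
    have h2 : (Nat.factorial j : ℂ) ≠ 0 := Nat.cast_ne_zero.2 (Nat.factorial_ne_zero j)
    have h3 : (Nat.factorial (i+1) : ℂ) ≠ 0 := Nat.cast_ne_zero.2 (Nat.factorial_ne_zero _)
    have h4 : (Nat.factorial (j+1) : ℂ) ≠ 0 := Nat.cast_ne_zero.2 (Nat.factorial_ne_zero _)
    field_simp
    ring
  have hshift2 : HasSum (fun q : ℕ × ℕ => c * T q)
      ((1 - x - y) ^ (2-a) - (1 - y) ^ (2-a) - ((1 - x) ^ (2-a) - 1)) :=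
    hshift.congr_fun (fun q => (hterm q).symm)
  have hTsum : HasSum T
      (((1 - x - y) ^ (2-a) - (1 - y) ^ (2-a) - ((1 - x) ^ (2-a) - 1)) / c) := by
    have h := hshift2.div_const c
    refine h.congr_fun (fun q => ?_)
    rw [mul_div_cancel_left₀ _ hcne]
  have happ : appellF2 a 1 1 2 2 x y
      = ((1 - x - y) ^ (2-a) - (1 - y) ^ (2-a) - ((1 - x) ^ (2-a) - 1)) / c := by
    rw [appellF2]
    exact hTsum.tsum_eq
  rw [happ, hc]
  rw [show (1 - a) * (2 - a) * x * y = (a - 2) * (a - 1) * x * y from by ring]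
  congr 1
  ring
end

section
/- For all real numbers x, y with 0 < x, 0 < y and x + y < 1, Appell's second hypergeometric function satisfies F₂(1; 1, 1; 2, 2; x, y) = ((1−x−y)·ln(1−x−y) − (1−x)·ln(1−x) − (1−y)·ln(1−y)) / (x y). -/
/-- Pochhammer symbol `(x)_k = ∏_{i=0}^{k-1} (x + i)` for a real number `x`. -/
noncomputable def pochR (x : ℝ) (k : ℕ) : ℝ := ∏ i ∈ Finset.range k, (x + i)

/-- Appell's `F₂` double series (real version). -/
noncomputable def appellF2R (a b₁ b₂ c₁ c₂ x y : ℝ) : ℝ :=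
  ∑' p : ℕ × ℕ, pochR a (p.1 + p.2) * pochR b₁ p.1 * pochR b₂ p.2 /
    (pochR c₁ p.1 * pochR c₂ p.2 * (Nat.factorial p.1 : ℝ) * (Nat.factorial p.2 : ℝ)) *
    x ^ p.1 * y ^ p.2

open Finset Real

lemma pochR_one (k : ℕ) : pochR 1 k = (Nat.factorial k : ℝ) := by
  induction k with
  | zero => simp [pochR]
  | succ n ih =>
      rw [pochR, Finset.prod_range_succ, ← pochR, ih, Nat.factorial_succ]
      push_cast; ring

lemma pochR_two (k : ℕ) : pochR 2 k = (Nat.factorial (k + 1) : ℝ) := by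
  induction k with
  | zero => simp [pochR]
  | succ n ih =>
      rw [pochR, Finset.prod_range_succ, ← pochR, ih, Nat.factorial_succ (n+1)]
      push_cast; ring

/-- The general term of `F₂(1;1,1;2,2)`. -/
noncomputable def G (x y : ℝ) (i j : ℕ) : ℝ :=
  ((i + j).choose i : ℝ) * x ^ i * y ^ j / ((i + 1) * (j + 1))

lemma term_eq (x y : ℝ) (p : ℕ × ℕ) :
    pochR 1 (p.1 + p.2) * pochR 1 p.1 * pochR 1 p.2 /
      (pochR 2 p.1 * pochR 2 p.2 * (Nat.factorial p.1 : ℝ) * (Nat.factorial p.2 : ℝ)) *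
      x ^ p.1 * y ^ p.2 = G x y p.1 p.2 := by
  obtain ⟨i, j⟩ := p
  simp only [pochR_one, pochR_two, G]
  have hfact : ((i + j).factorial : ℝ) = ((i + j).choose i : ℝ) * i.factorial * j.factorial := by
    have := Nat.choose_mul_factorial_mul_factorial (Nat.le_add_right i j)
    rw [Nat.add_sub_cancel_left] at this
    exact_mod_cast this.symm
  rw [hfact, Nat.factorial_succ i, Nat.factorial_succ j]
  have hi : (i.factorial : ℝ) ≠ 0 := Nat.cast_ne_zero.2 i.factorial_ne_zero
  have hj : (j.factorial : ℝ) ≠ 0 := Nat.cast_ne_zero.2 j.factorial_ne_zero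
  have hi1 : ((i : ℝ) + 1) ≠ 0 := by positivity
  have hj1 : ((j : ℝ) + 1) ≠ 0 := by positivity
  field_simp
  push_cast
  ring

/-- Binomial sum with the `k = 0` term removed. -/
lemma sum_pow_succ (a b : ℝ) (n : ℕ) :
    ∑ i ∈ range (n + 1), ((n + 1).choose (i + 1) : ℝ) * a ^ (i + 1) * b ^ (n - i)
      = (a + b) ^ (n + 1) - b ^ (n + 1) := by
  have h := add_pow a b (n + 1)
  rw [Finset.sum_range_succ'] at h
  have h0 : a ^ 0 * b ^ (n + 1 - 0) * ((n + 1).choose 0 : ℝ) = b ^ (n + 1) := by simp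
  rw [h0] at h
  have : ∀ i ∈ range (n + 1),
      a ^ (i + 1) * b ^ (n + 1 - (i + 1)) * ((n + 1).choose (i + 1) : ℝ)
        = ((n + 1).choose (i + 1) : ℝ) * a ^ (i + 1) * b ^ (n - i) := by
    intro i _
    have : n + 1 - (i + 1) = n - i := by omega
    rw [this]; ring
  rw [Finset.sum_congr rfl this] at h
  linarith

lemma sum_choose_div (x y : ℝ) (hx : x ≠ 0) (n : ℕ) :
    ∑ i ∈ range (n + 1), ((n.choose i : ℝ) * x ^ i * y ^ (n - i) / (i + 1))
      = ((x + y) ^ (n + 1) - y ^ (n + 1)) / ((n + 1) * x) := by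
  have key : ∀ i ∈ range (n + 1),
      (n.choose i : ℝ) * x ^ i * y ^ (n - i) / (i + 1)
        = ((n + 1).choose (i + 1) : ℝ) * x ^ (i + 1) * y ^ (n - i) / ((n + 1) * x) := by
    intro i _
    have hc : ((n : ℝ) + 1) * (n.choose i : ℝ)
        = ((n + 1).choose (i + 1) : ℝ) * ((i : ℝ) + 1) := by
      exact_mod_cast Nat.add_one_mul_choose_eq n i
    rw [div_eq_div_iff (by positivity) (by positivity)]
    linear_combination (x ^ i * x * y ^ (n - i)) * hc
  rw [Finset.sum_congr rfl key, ← Finset.sum_div, ← sum_pow_succ x y n]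


lemma antidiag_sum (x y : ℝ) (hx : x ≠ 0) (hy : y ≠ 0) (n : ℕ) :
    ∑ p ∈ Finset.HasAntidiagonal.antidiagonal n, G x y p.1 p.2
      = (((x + y) ^ (n + 1) - y ^ (n + 1)) / x + ((x + y) ^ (n + 1) - x ^ (n + 1)) / y)
          / (((n : ℝ) + 1) * ((n : ℝ) + 2)) := by
  rw [Finset.Nat.sum_antidiagonal_eq_sum_range_succ_mk]
  have step : ∀ i ∈ range (n + 1), G x y i (n - i)
      = ((n.choose i : ℝ) * x ^ i * y ^ (n - i) / (i + 1)
        + (n.choose i : ℝ) * x ^ i * y ^ (n - i) / (((n - i : ℕ) : ℝ) + 1)) / ((n : ℝ) + 2) := by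
    intro i hi
    have hin : i ≤ n := Nat.lt_succ_iff.mp (Finset.mem_range.mp hi)
    have h1 : i + (n - i) = n := Nat.add_sub_cancel' hin
    have h2 : ((n - i : ℕ) : ℝ) = (n : ℝ) - i := by
      rw [Nat.cast_sub hin]
    have hile : (i : ℝ) ≤ n := by exact_mod_cast hin
    rw [G, h1, h2]
    have hi1 : ((i : ℝ) + 1) ≠ 0 := by positivity
    have hni1 : ((n : ℝ) - i + 1) ≠ 0 := ne_of_gt (by linarith)
    have hn2 : ((n : ℝ) + 2) ≠ 0 := by positivity
    field_simp
    ring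
  rw [Finset.sum_congr rfl step, ← Finset.sum_div, Finset.sum_add_distrib,
    sum_choose_div x y hx n]
  have hB : ∑ i ∈ range (n + 1), (n.choose i : ℝ) * x ^ i * y ^ (n - i) / (((n - i : ℕ) : ℝ) + 1)
      = ((y + x) ^ (n + 1) - x ^ (n + 1)) / ((n + 1) * y) := by
    rw [← sum_choose_div y x hy n,
      ← Finset.sum_range_reflect (fun j => (n.choose j : ℝ) * y ^ j * x ^ (n - j) / (j + 1)) (n + 1)]
    refine Finset.sum_congr rfl fun i hi => ?_
    have hin : i ≤ n := Nat.lt_succ_iff.mp (Finset.mem_range.mp hi)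
    have e1 : n + 1 - 1 - i = n - i := by omega
    have e2 : n - (n - i) = i := by omega
    have e3 : n.choose (n - i) = n.choose i := Nat.choose_symm hin
    simp only [e1, e2, e3]
    ring
  rw [hB]
  have hn1 : ((n : ℝ) + 1) ≠ 0 := by positivity
  have hn2 : ((n : ℝ) + 2) ≠ 0 := by positivity
  rw [show (y + x) = (x + y) by ring]
  field_simp

lemma hasSum_f {t : ℝ} (h0 : 0 < t) (h1 : t < 1) :
    HasSum (fun n : ℕ => t ^ (n + 1) / (((n : ℝ) + 1) * ((n : ℝ) + 2)))
      ((t + (1 - t) * Real.log (1 - t)) / t) := by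
  have ht : t ≠ 0 := ne_of_gt h0
  have habs : |t| < 1 := abs_lt.2 ⟨by linarith, h1⟩
  have A := Real.hasSum_pow_div_log_of_abs_lt_one habs
  have B : HasSum (fun n : ℕ => t ^ (n + 2) / ((n : ℝ) + 2)) (-Real.log (1 - t) - t) := by
    have B0 : HasSum (fun n : ℕ => t ^ (n + 1 + 1) / (((n + 1 : ℕ) : ℝ) + 1))
        (-Real.log (1 - t) - t) := by
      apply (hasSum_nat_add_iff (f := fun n : ℕ => t ^ (n + 1) / ((n : ℝ) + 1)) 1).2
      convert A using 1
      · rfl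
      simp
    have hfe : (fun n : ℕ => t ^ (n + 1 + 1) / (((n + 1 : ℕ) : ℝ) + 1))
        = fun n : ℕ => t ^ (n + 2) / ((n : ℝ) + 2) := by
      funext n; push_cast; ring_nf
    rwa [hfe] at B0
  have C : HasSum (fun n : ℕ => t ^ (n + 1) / ((n : ℝ) + 2)) ((-Real.log (1 - t) - t) / t) := by
    have hC := B.div_const t
    have hfe : (fun n : ℕ => t ^ (n + 2) / ((n : ℝ) + 2) / t)
        = fun n : ℕ => t ^ (n + 1) / ((n : ℝ) + 2) := by
      funext n
      have hn2 : ((n : ℝ) + 2) ≠ 0 := by positivity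
      rw [pow_succ]
      field_simp
    rwa [hfe] at hC
  have D := A.sub C
  have hfe2 : (fun n : ℕ => t ^ (n + 1) / ((n : ℝ) + 1) - t ^ (n + 1) / ((n : ℝ) + 2))
      = fun n : ℕ => t ^ (n + 1) / (((n : ℝ) + 1) * ((n : ℝ) + 2)) := by
    funext n
    have h1' : ((n : ℝ) + 1) ≠ 0 := by positivity
    have h2' : ((n : ℝ) + 2) ≠ 0 := by positivity
    field_simp
    ring
  rw [hfe2] at D
  convert D using 1
  · rfl
  field_simp
  ring

theorem stmt_2 (x y : ℝ) (hx : 0 < x) (hy : 0 < y) (hxy : x + y < 1) :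
    appellF2R 1 1 1 2 2 x y =
      ((1 - x - y) * Real.log (1 - x - y) - (1 - x) * Real.log (1 - x)
        - (1 - y) * Real.log (1 - y)) / (x * y) := by
  have hxne : x ≠ 0 := ne_of_gt hx
  have hyne : y ≠ 0 := ne_of_gt hy
  have hsne : x + y ≠ 0 := by positivity
  set N : ℝ := (1 - x - y) * Real.log (1 - x - y) - (1 - x) * Real.log (1 - x)
      - (1 - y) * Real.log (1 - y) with hN
  -- the diagonal sums
  set h : ℕ → ℝ := fun n =>
    (((x + y) ^ (n + 1) - y ^ (n + 1)) / x + ((x + y) ^ (n + 1) - x ^ (n + 1)) / y)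
      / (((n : ℝ) + 1) * ((n : ℝ) + 2)) with hh
  have Fs := hasSum_f (t := x + y) (by positivity) hxy
  have Fx := hasSum_f (t := x) hx (by linarith)
  have Fy := hasSum_f (t := y) hy (by linarith)
  have Hh : HasSum h (N / (x * y)) := by
    have H := ((Fs.mul_right (1 / x + 1 / y)).sub (Fy.mul_right (1 / x))).sub
      (Fx.mul_right (1 / y))
    have hfe : (fun n : ℕ =>
        (x + y) ^ (n + 1) / (((n : ℝ) + 1) * ((n : ℝ) + 2)) * (1 / x + 1 / y)
          - y ^ (n + 1) / (((n : ℝ) + 1) * ((n : ℝ) + 2)) * (1 / x)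
          - x ^ (n + 1) / (((n : ℝ) + 1) * ((n : ℝ) + 2)) * (1 / y)) = h := by
      funext n
      have h1' : ((n : ℝ) + 1) ≠ 0 := by positivity
      have h2' : ((n : ℝ) + 2) ≠ 0 := by positivity
      rw [hh]
      field_simp
      ring
    rw [hfe] at H
    have hval : (x + y + (1 - (x + y)) * Real.log (1 - (x + y))) / (x + y) * (1 / x + 1 / y)
        - (y + (1 - y) * Real.log (1 - y)) / y * (1 / x)
        - (x + (1 - x) * Real.log (1 - x)) / x * (1 / y) = N / (x * y) := by
      rw [hN, show (1 : ℝ) - (x + y) = 1 - x - y by ring]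
      field_simp
      ring
    rwa [hval] at H
  -- fiberwise sums over antidiagonals
  have hfiber : ∀ n : ℕ,
      HasSum (fun c : (Finset.HasAntidiagonal.antidiagonal n : Finset (ℕ × ℕ)) => G x y (c : ℕ × ℕ).1 (c : ℕ × ℕ).2)
        (h n) := by
    intro n
    have := hasSum_fintype
      (fun c : (Finset.HasAntidiagonal.antidiagonal n : Finset (ℕ × ℕ)) => G x y (c : ℕ × ℕ).1 (c : ℕ × ℕ).2)
    rw [Finset.sum_coe_sort (Finset.HasAntidiagonal.antidiagonal n) (fun p : ℕ × ℕ => G x y p.1 p.2),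
      antidiag_sum x y hxne hyne n] at this
    exact this
  -- nonnegativity of the terms
  have hGnn : ∀ p : ℕ × ℕ, 0 ≤ G x y p.1 p.2 := by
    intro p
    rw [G]
    positivity
  -- summability over the sigma type
  set f : (Σ n : ℕ, (Finset.HasAntidiagonal.antidiagonal n : Finset (ℕ × ℕ))) → ℝ :=
    fun q => G x y (q.2 : ℕ × ℕ).1 (q.2 : ℕ × ℕ).2 with hf
  have hfsum : Summable f := by
    rw [summable_sigma_of_nonneg (f := f) (fun q => hGnn (q.2 : ℕ × ℕ))]
    constructor
    · intro n
      exact (hfiber n).summable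
    · have : (fun n : ℕ => ∑' c : (Finset.HasAntidiagonal.antidiagonal n : Finset (ℕ × ℕ)), f ⟨n, c⟩) = h := by
        funext n
        exact (hfiber n).tsum_eq
      rw [this]
      exact Hh.summable
  have Hf : HasSum f (N / (x * y)) := HasSum.sigma_of_hasSum Hh hfiber hfsum
  have HF : HasSum (fun p : ℕ × ℕ => G x y p.1 p.2) (N / (x * y)) := by
    have : HasSum ((fun p : ℕ × ℕ => G x y p.1 p.2) ∘ Finset.HasAntidiagonal.sigmaAntidiagonalEquivProd) (N / (x * y)) := Hf
    exact (Equiv.hasSum_iff Finset.HasAntidiagonal.sigmaAntidiagonalEquivProd).1 this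
  rw [appellF2R, tsum_congr (term_eq x y), HF.tsum_eq]
end
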